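/- Consider the block-structured problem where x = (x_1,…,x_n), h(x) = ∑_{i=1}^n h_i(x_i), and A = [A_1,…,A_n]. Fix (x^k, y^k, z^k) with z^k ≥ 0 componentwise and r^k = Ax^k − b. For each i ∈ {1,…,n}, let x^{k+1}(i) agree with x^k on all blocks except block i, where x_i^{k+1}(i) minimizes over x_i the function h_i(x_i) + ⟨∇_{x_i} F_β(x^k,y^k,z^k), x_i⟩ + (η_i/2)‖x_i − x_i^k‖²; let r^{k+1}(i) = Ax^{k+1}(i) − b and y^{k+1}(i) = y^k + ρ_y r^{k+1}(i). Assume for each i there is ℓ_i^k ≥ 0 such that for all x and all block-i directions d, g(x + U_i d) + Ψ_β(x + U_i d, z^k) ≤ g(x) + Ψ_β(x, z^k) + ⟨∇_{x_i}(g + Ψ_β(·, z^k))(x), d⟩ + (ℓ_i^k/2)‖d‖², where U_i d places d in block i and zeros elsewhere. Then for every x with Ax = b and f_j(x) ≤ 0 for all j: (1/n)∑_{i=1}^n [ f_0(x^{k+1}(i)) − f_0(x) + ⟨y^{k+1}(i), r^{k+1}(i)⟩ + (β − ρ_y)‖r^{k+1}(i)‖² + Ψ_β(x^{k+1}(i),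 z^k) + (1/2)(‖x^{k+1}(i) − x‖²_η − ‖x^k − x‖²_η + ‖x^{k+1}(i) − x^k‖²_{η − ℓ^k}) − (β/2)(‖r^{k+1}(i)‖² − ‖r^k‖² + ‖A(x^{k+1}(i) − x^k)‖²) ] ≤ (1 − 1/n)·[ f_0(x^k) − f_0(x) + ⟨y^k, r^k⟩ + β‖r^k‖² + Ψ_β(x^k, z^k) ], where ‖u‖²_η = ∑_i η_i‖u_i‖² and ‖u‖²_{η−ℓ^k} = ∑_i (η_i − ℓ_i^k)‖u_i‖². -/

import Mathlib

open scoped RealInnerProductSpace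
open Topology Filter

noncomputable section

/-- The function `ψ_β(u,v)` used in the classic augmented Lagrangian. -/
def psi (β u v : ℝ) : ℝ :=
  if 0 ≤ β * u + v then u * v + β / 2 * u ^ 2 else -(v ^ 2) / (2 * β)

/-- `Ψ_β(x,z) = ∑_j ψ_β(f_j(x), z_j)`. -/
def PsiAug {m : ℕ} {E : Type*} (β : ℝ) (f : Fin m → E → ℝ) (x : E)
    (z : EuclideanSpace ℝ (Fin m)) : ℝ :=
  ∑ j, psi β (f j x) (z j)

/-- The block-structured primal space `x = (x_1,…,x_n)` with the Euclidean (ℓ²) product norm. -/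
abbrev EB {n : ℕ} (d : Fin n → ℕ) := PiLp 2 (fun i : Fin n => EuclideanSpace ℝ (Fin (d i)))

/-- `U_i ξ`: the element of the product space whose block `i` is `ξ` and whose other blocks
are zero. -/
def blockSingle {n : ℕ} {d : Fin n → ℕ} (i : Fin n) (ξ : EuclideanSpace ℝ (Fin (d i))) : EB d :=
  WithLp.toLp 2 (Pi.single (M := fun j => EuclideanSpace ℝ (Fin (d j))) i ξ)

/-- `A x = ∑_i A_i x_i` for the block matrix `A = [A_1,…,A_n]`. -/
def Amul {n q : ℕ} {d : Fin n → ℕ}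
    (A : ∀ i : Fin n, EuclideanSpace ℝ (Fin (d i)) →L[ℝ] EuclideanSpace ℝ (Fin q))
    (x : EB d) : EuclideanSpace ℝ (Fin q) :=
  ∑ i, A i (x i)

lemma psi_mono {β : ℝ} (hβ : 0 < β) {u u' v : ℝ} (h : u ≤ u') :
    psi β u v ≤ psi β u' v := by
  unfold psi
  split_ifs with h1 h2 h2
  · nlinarith
  · exact absurd (by nlinarith : (0:ℝ) ≤ β * u' + v) h2
  · rw [div_le_iff₀ (by positivity : (0:ℝ) < 2 * β)]
    nlinarith [sq_nonneg (β * u' + v)]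
  · exact le_refl _

lemma psi_grad {β : ℝ} (hβ : 0 < β) (t s v : ℝ) :
    psi β t v + max (β * t + v) 0 * (s - t) ≤ psi β s v := by
  unfold psi
  split_ifs with h1 h2 h2
  · rw [max_eq_left h1]; nlinarith [mul_nonneg hβ.le (sq_nonneg (s - t))]
  · rw [max_eq_left h1]
    have h2' : β * s + v ≤ 0 := le_of_not_ge h2
    have key : 0 ≤ (β * t + v) * ((β * t + v) - 2 * (β * s + v)) :=
      mul_nonneg h1 (by linarith)
    rw [le_div_iff₀ (by positivity : (0:ℝ) < 2 * β)]
    nlinarith [key]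
  · rw [max_eq_right (le_of_not_ge h1), zero_mul, add_zero]
    rw [div_le_iff₀ (by positivity : (0:ℝ) < 2 * β)]
    nlinarith [sq_nonneg (β * s + v)]
  · rw [max_eq_right (le_of_not_ge h1), zero_mul, add_zero]

lemma psi_nonpos {β : ℝ} (hβ : 0 < β) {u v : ℝ} (hu : u ≤ 0) (hv : 0 ≤ v) :
    psi β u v ≤ 0 := by
  unfold psi
  split_ifs with h1
  · nlinarith
  · exact div_nonpos_of_nonpos_of_nonneg (by nlinarith) (by positivity)

lemma convex_grad_ineq {E : Type*} [NormedAddCommGroup E] [InnerProductSpace ℝ E]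
    [CompleteSpace E] {F : E → ℝ} {G x₀ : E}
    (hF : ConvexOn ℝ Set.univ F) (hG : HasGradientAt F G x₀) (y : E) :
    F x₀ + ⟪G, y - x₀⟫ ≤ F y := by
  set v := y - x₀ with hv
  have hline : HasDerivAt (fun t : ℝ => F (x₀ + t • v)) ⟪G, v⟫ 0 := by
    have h1 : HasFDerivAt F (InnerProductSpace.toDual ℝ E G) x₀ := hG.hasFDerivAt
    have h0 : x₀ = x₀ + (0:ℝ) • v := by simp
    rw [h0] at h1
    have h2 : HasDerivAt (fun t : ℝ => x₀ + t • v) v 0 := by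
      simpa using ((hasDerivAt_id (0:ℝ)).smul_const v).const_add x₀
    have h3 := h1.comp_hasDerivAt 0 h2
    simp at h3
    exact h3
  rw [hasDerivAt_iff_tendsto_slope] at hline
  have hmono : 𝓝[>] (0:ℝ) ≤ 𝓝[≠] (0:ℝ) :=
    nhdsWithin_mono _ (fun t ht => ne_of_gt ht)
  have hev : ∀ᶠ t in 𝓝[>] (0:ℝ),
      slope (fun t : ℝ => F (x₀ + t • v)) 0 t ≤ F y - F x₀ := by
    filter_upwards [Ioo_mem_nhdsGT_of_mem (by norm_num : (0:ℝ) ∈ Set.Ico 0 1)] with t ht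
    have ht0 : 0 < t := ht.1
    have ht1 : t < 1 := ht.2
    have hconv := hF.2 (Set.mem_univ x₀) (Set.mem_univ y)
      (by linarith : (0:ℝ) ≤ 1 - t) ht0.le (by ring)
    simp only [smul_eq_mul] at hconv
    have heq : (1 - t) • x₀ + t • y = x₀ + t • v := by
      rw [hv]; module
    rw [heq] at hconv
    rw [slope_def_field]
    simp only [sub_zero]
    rw [div_le_iff₀ ht0]
    simp only [zero_smul, add_zero]
    nlinarith
  have := le_of_tendsto (hline.mono_left hmono) hev
  linarith

lemma strong_min {E : Type*} [NormedAddCommGroup E] [InnerProductSpace ℝ E]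
    {h : E → ℝ} (hh : ConvexOn ℝ Set.univ h) (s x₀ p : E) {c : ℝ} (hc : 0 < c)
    (hmin : ∀ ξ, h p + ⟪s, p⟫ + c / 2 * ‖p - x₀‖ ^ 2 ≤ h ξ + ⟪s, ξ⟫ + c / 2 * ‖ξ - x₀‖ ^ 2)
    (ξ : E) :
    h p + ⟪s, p⟫ + c / 2 * ‖p - x₀‖ ^ 2 + c / 2 * ‖ξ - p‖ ^ 2
      ≤ h ξ + ⟪s, ξ⟫ + c / 2 * ‖ξ - x₀‖ ^ 2 := by
  set w := ξ - p with hw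
  set a := p - x₀ with ha
  have key : h p ≤ h ξ + ⟪s, w⟫ + c * ⟪a, w⟫ := by
    have hkt : ∀ t : ℝ, t ∈ Set.Ioo (0:ℝ) 1 →
        h p ≤ h ξ + ⟪s, w⟫ + c * ⟪a, w⟫ + c / 2 * t * ‖w‖ ^ 2 := by
      intro t ht
      have ht0 : 0 < t := ht.1
      have ht1 : t < 1 := ht.2
      have hconv := hh.2 (Set.mem_univ p) (Set.mem_univ ξ)
        (by linarith : (0:ℝ) ≤ 1 - t) ht0.le (by ring)
      simp only [smul_eq_mul] at hconv
      have heq : (1 - t) • p + t • ξ = p + t • w := by rw [hw]; module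
      rw [heq] at hconv
      have hm := hmin (p + t • w)
      have hinner : ⟪s, p + t • w⟫ = ⟪s, p⟫ + t * ⟪s, w⟫ := by
        rw [inner_add_right, real_inner_smul_right]
      have hnorm : ‖p + t • w - x₀‖ ^ 2
          = ‖a‖ ^ 2 + 2 * (t * ⟪a, w⟫) + t ^ 2 * ‖w‖ ^ 2 := by
        have h4 : p + t • w - x₀ = a + t • w := by rw [ha]; abel
        rw [h4, norm_add_sq_real, real_inner_smul_right, norm_smul,
          Real.norm_eq_abs, abs_of_pos ht0]
        ring
      rw [hinner, hnorm] at hm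
      by_contra hcon
      push_neg at hcon
      nlinarith [mul_pos ht0 (sub_pos.mpr hcon)]
    have htend : Filter.Tendsto
        (fun t : ℝ => h ξ + ⟪s, w⟫ + c * ⟪a, w⟫ + c / 2 * t * ‖w‖ ^ 2)
        (𝓝[>] (0:ℝ)) (𝓝 (h ξ + ⟪s, w⟫ + c * ⟪a, w⟫)) := by
      have hcont : Continuous (fun t : ℝ => h ξ + ⟪s, w⟫ + c * ⟪a, w⟫ + c / 2 * t * ‖w‖ ^ 2) := by
        fun_prop
      have h6 := hcont.tendsto 0
      simp only [mul_zero, zero_mul, add_zero] at h6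
      exact h6.mono_left nhdsWithin_le_nhds
    refine ge_of_tendsto htend ?_
    filter_upwards [Ioo_mem_nhdsGT_of_mem (by norm_num : (0:ℝ) ∈ Set.Ico 0 1)] with t ht
    exact hkt t ht
  have hexp : ‖ξ - x₀‖ ^ 2 = ‖a‖ ^ 2 + 2 * ⟪a, w⟫ + ‖w‖ ^ 2 := by
    have h5 : ξ - x₀ = a + w := by rw [ha, hw]; abel
    rw [h5, norm_add_sq_real]
  have hsx : ⟪s, ξ⟫ = ⟪s, p⟫ + ⟪s, w⟫ := by
    rw [hw, inner_sub_right]; ring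
  rw [hexp, hsx]
  linarith


lemma sum_shift' {n : ℕ} {M : Type*} [AddCommGroup M] (i : Fin n) (F K : Fin n → M)
    (hFK : ∀ i', i' ≠ i → F i' = K i') :
    ∑ i', F i' = (∑ i', K i') + (F i - K i) := by
  have h1 : ∑ i', (F i' - K i') = F i - K i :=
    Finset.sum_eq_single_of_mem i (Finset.mem_univ i)
      (fun i' _ hi' => by rw [hFK i' hi', sub_self])
  have h2 : ∑ i', (F i' - K i') = (∑ i', F i') - ∑ i', K i' := Finset.sum_sub_distrib _ _
  rw [h2] at h1
  exact sub_eq_iff_eq_add'.mp h1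


set_option maxHeartbeats 2000000 in
/-- one-iteration result of BLALM, written with the uniform average over the
block chosen at iteration `k`. -/
theorem stmt18 {n q m : ℕ} (d : Fin n → ℕ) (hn : 0 < n)
    (β ρy : ℝ) (hβ : 0 < β) (hρy : 0 < ρy) (η ℓ : Fin n → ℝ)
    (hη : ∀ i, 0 < η i) (hℓ : ∀ i, 0 ≤ ℓ i)
    (g : EB d → ℝ) (h : ∀ i : Fin n, EuclideanSpace ℝ (Fin (d i)) → ℝ)
    (f : Fin m → EB d → ℝ)
    (g' : EB d → EB d) (f' : Fin m → EB d → EB d)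
    (A : ∀ i : Fin n, EuclideanSpace ℝ (Fin (d i)) →L[ℝ] EuclideanSpace ℝ (Fin q))
    (b : EuclideanSpace ℝ (Fin q))
    (hgconv : ConvexOn ℝ Set.univ g) (hhconv : ∀ i, ConvexOn ℝ Set.univ (h i))
    (hfconv : ∀ j, ConvexOn ℝ Set.univ (f j))
    (hg : ∀ x, HasGradientAt g (g' x) x)
    (hf : ∀ j x, HasGradientAt (f j) (f' j x) x)
    -- the current iterate `(x^k, y^k, z^k)` with `z^k ≥ 0`
    (xk : EB d) (yk : EuclideanSpace ℝ (Fin q)) (zk : EuclideanSpace ℝ (Fin m))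
    (hzk : ∀ j, 0 ≤ zk j)
    -- blockwise descent property with constants `ℓ_i^k`
    (hdesc : ∀ (i : Fin n) (x : EB d) (ξ : EuclideanSpace ℝ (Fin (d i))),
      g (x + blockSingle i ξ) + PsiAug β f (x + blockSingle i ξ) zk
        ≤ g x + PsiAug β f x zk
          + ⟪(g' x) i + ∑ j, max (β * f j x + zk j) 0 • (f' j x) i, ξ⟫
          + ℓ i / 2 * ‖ξ‖ ^ 2)
    -- the candidate updates: `x^{k+1}(i)` changes only block `i`, which solves the prox step
    (x1 : Fin n → EB d) (y1 : Fin n → EuclideanSpace ℝ (Fin q))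
    (hx1 : ∀ (i : Fin n) (i' : Fin n), i' ≠ i → x1 i i' = xk i')
    (hx1min : ∀ i : Fin n, ∀ ξ : EuclideanSpace ℝ (Fin (d i)),
      h i (x1 i i) + ⟪(g' xk) i + (ContinuousLinearMap.adjoint (A i)) (yk + β • (Amul A xk - b))
            + ∑ j, max (β * f j xk + zk j) 0 • (f' j xk) i, x1 i i⟫
          + η i / 2 * ‖x1 i i - xk i‖ ^ 2
        ≤ h i ξ + ⟪(g' xk) i + (ContinuousLinearMap.adjoint (A i)) (yk + β • (Amul A xk - b))
            + ∑ j, max (β * f j xk + zk j) 0 • (f' j xk) i, ξ⟫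
          + η i / 2 * ‖ξ - xk i‖ ^ 2)
    (hy1 : ∀ i, y1 i = yk + ρy • (Amul A (x1 i) - b)) :
    -- conclusion: for every feasible `x`
    ∀ x : EB d, Amul A x = b → (∀ j, f j x ≤ 0) →
      (1 / (n : ℝ)) * ∑ i,
          ((g (x1 i) + ∑ i', h i' (x1 i i')) - (g x + ∑ i', h i' (x i'))
            + ⟪y1 i, Amul A (x1 i) - b⟫ + (β - ρy) * ‖Amul A (x1 i) - b‖ ^ 2
            + PsiAug β f (x1 i) zk
            + 1 / 2 * ((∑ i', η i' * ‖x1 i i' - x i'‖ ^ 2) - (∑ i', η i' * ‖xk i' - x i'‖ ^ 2)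
                + ∑ i', (η i' - ℓ i') * ‖x1 i i' - xk i'‖ ^ 2)
            - β / 2 * (‖Amul A (x1 i) - b‖ ^ 2 - ‖Amul A xk - b‖ ^ 2
                + ‖Amul A (x1 i - xk)‖ ^ 2))
        ≤ (1 - 1 / (n : ℝ)) * ((g xk + ∑ i', h i' (xk i')) - (g x + ∑ i', h i' (x i'))
            + ⟪yk, Amul A xk - b⟫ + β * ‖Amul A xk - b‖ ^ 2 + PsiAug β f xk zk) := by
  intro x hx hfx
  have hn' : (0 : ℝ) < (n : ℝ) := by exact_mod_cast hn
  set rk : EuclideanSpace ℝ (Fin q) := Amul A xk - b with hrk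
  -- x1 i as a single-block update of xk
  have hE1 : ∀ i, xk + blockSingle i (x1 i i - xk i) = x1 i := by
    intro i
    refine PiLp.ext (fun i' => ?_)
    rw [PiLp.add_apply]
    by_cases hii : i' = i
    · subst hii
      simp only [blockSingle, WithLp.ofLp_toLp, Pi.single_eq_same]
      abel
    · simp only [blockSingle, WithLp.ofLp_toLp, Pi.single_eq_of_ne hii]
      rw [hx1 i i' hii, add_zero]
  -- A applied to updates
  have hAmul1 : ∀ i, Amul A (x1 i) - b = rk + A i (x1 i i - xk i) := by
    intro i
    have h1 : Amul A (x1 i) = Amul A xk + (A i (x1 i i) - A i (xk i)) := by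
      unfold Amul
      exact sum_shift' i _ _ (fun i' hi' => by rw [hx1 i i' hi'])
    rw [h1, map_sub, hrk]
    abel
  have hAsub : ∀ i, Amul A (x1 i - xk) = A i (x1 i i - xk i) := by
    intro i
    unfold Amul
    rw [Finset.sum_eq_single_of_mem i (Finset.mem_univ i) (fun i' _ hi' => by
      rw [PiLp.sub_apply, hx1 i i' hi', sub_self, map_zero])]
    rw [PiLp.sub_apply]
  -- sums over blocks
  have e3 : ∀ i, ∑ i', h i' (x1 i i')
      = (∑ i', h i' (xk i')) + (h i (x1 i i) - h i (xk i)) := by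
    intro i
    exact sum_shift' i _ _ (fun i' hi' => by rw [hx1 i i' hi'])
  have e4 : ∀ i, ∑ i', η i' * ‖x1 i i' - x i'‖ ^ 2
      = (∑ i', η i' * ‖xk i' - x i'‖ ^ 2)
        + (η i * ‖x1 i i - x i‖ ^ 2 - η i * ‖xk i - x i‖ ^ 2) := by
    intro i
    exact sum_shift' i _ _ (fun i' hi' => by rw [hx1 i i' hi'])
  have e5 : ∀ i, ∑ i', (η i' - ℓ i') * ‖x1 i i' - xk i'‖ ^ 2
      = (η i - ℓ i) * ‖x1 i i - xk i‖ ^ 2 := by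
    intro i
    exact Finset.sum_eq_single_of_mem i (Finset.mem_univ i) (fun i' _ hi' => by
      rw [hx1 i i' hi', sub_self, norm_zero]; ring)
  -- the RHS bracket
  set Cq : ℝ := (g xk + ∑ i', h i' (xk i')) - (g x + ∑ i', h i' (x i'))
      + ⟪yk, rk⟫ + β * ‖rk‖ ^ 2 + PsiAug β f xk zk with hCq
  set D : Fin n → ℝ := fun i => (h i (x i) - h i (xk i))
      + ⟪(g' xk) i + ∑ j, max (β * f j xk + zk j) 0 • (f' j xk) i, x i - xk i⟫
      + ⟪yk, A i (x i) - A i (xk i)⟫ + β * ⟪rk, A i (x i) - A i (xk i)⟫ with hD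
  -- per-block inequality
  have key : ∀ i : Fin n,
      (g (x1 i) + ∑ i', h i' (x1 i i')) - (g x + ∑ i', h i' (x i'))
        + ⟪y1 i, Amul A (x1 i) - b⟫ + (β - ρy) * ‖Amul A (x1 i) - b‖ ^ 2
        + PsiAug β f (x1 i) zk
        + 1 / 2 * ((∑ i', η i' * ‖x1 i i' - x i'‖ ^ 2) - (∑ i', η i' * ‖xk i' - x i'‖ ^ 2)
            + ∑ i', (η i' - ℓ i') * ‖x1 i i' - xk i'‖ ^ 2)
        - β / 2 * (‖Amul A (x1 i) - b‖ ^ 2 - ‖rk‖ ^ 2 + ‖Amul A (x1 i - xk)‖ ^ 2)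
      ≤ Cq + D i := by
    intro i
    -- descent step
    have hdi := hdesc i xk (x1 i i - xk i)
    rw [hE1 i] at hdi
    -- prox step (strong convexity of the subproblem)
    have hB := strong_min (hhconv i)
      ((g' xk) i + (ContinuousLinearMap.adjoint (A i)) (yk + β • rk)
        + ∑ j, max (β * f j xk + zk j) 0 • (f' j xk) i)
      (xk i) (x1 i i) (hη i) (hx1min i) (x i)
    -- expand the inner products with the adjoint
    have hS : ∀ ξ : EuclideanSpace ℝ (Fin (d i)),
        ⟪(g' xk) i + (ContinuousLinearMap.adjoint (A i)) (yk + β • rk)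
          + ∑ j, max (β * f j xk + zk j) 0 • (f' j xk) i, ξ⟫
        = ⟪(g' xk) i + ∑ j, max (β * f j xk + zk j) 0 • (f' j xk) i, ξ⟫
          + ⟪yk, A i ξ⟫ + β * ⟪rk, A i ξ⟫ := by
      intro ξ
      simp only [inner_add_left, ContinuousLinearMap.adjoint_inner_left, inner_add_left,
        real_inner_smul_left]
      ring
    rw [hS, hS] at hB
    -- residual identities
    have h6 : ⟪y1 i, Amul A (x1 i) - b⟫
        = ⟪yk, Amul A (x1 i) - b⟫ + ρy * ‖Amul A (x1 i) - b‖ ^ 2 := by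
      rw [hy1 i, inner_add_left, real_inner_smul_left, real_inner_self_eq_norm_sq]
    have h7 : ‖Amul A (x1 i) - b‖ ^ 2
        = ‖rk‖ ^ 2 + 2 * ⟪rk, A i (x1 i i - xk i)⟫ + ‖A i (x1 i i - xk i)‖ ^ 2 := by
      rw [hAmul1 i, norm_add_sq_real]
    have h8 : ⟪yk, Amul A (x1 i) - b⟫ = ⟪yk, rk⟫ + ⟪yk, A i (x1 i i - xk i)⟫ := by
      rw [hAmul1 i, inner_add_right]
    -- linear expansions of inner products
    have hg1 : ⟪(g' xk) i + ∑ j, max (β * f j xk + zk j) 0 • (f' j xk) i, x1 i i⟫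
        = ⟪(g' xk) i + ∑ j, max (β * f j xk + zk j) 0 • (f' j xk) i, xk i⟫
          + ⟪(g' xk) i + ∑ j, max (β * f j xk + zk j) 0 • (f' j xk) i, x1 i i - xk i⟫ := by
      rw [inner_sub_right]; ring
    have hg2 : ⟪(g' xk) i + ∑ j, max (β * f j xk + zk j) 0 • (f' j xk) i, x i⟫
        = ⟪(g' xk) i + ∑ j, max (β * f j xk + zk j) 0 • (f' j xk) i, xk i⟫
          + ⟪(g' xk) i + ∑ j, max (β * f j xk + zk j) 0 • (f' j xk) i, x i - xk i⟫ := by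
      rw [inner_sub_right]; ring
    have hy_1 : ⟪yk, A i (x1 i i)⟫ = ⟪yk, A i (xk i)⟫ + ⟪yk, A i (x1 i i - xk i)⟫ := by
      rw [map_sub, inner_sub_right]; ring
    have hy_2 : ⟪yk, A i (x i)⟫ = ⟪yk, A i (xk i)⟫ + ⟪yk, A i (x i) - A i (xk i)⟫ := by
      rw [inner_sub_right]; ring
    have hr_1 : ⟪rk, A i (x1 i i)⟫ = ⟪rk, A i (xk i)⟫ + ⟪rk, A i (x1 i i - xk i)⟫ := by
      rw [map_sub, inner_sub_right]; ring
    have hr_2 : ⟪rk, A i (x i)⟫ = ⟪rk, A i (xk i)⟫ + ⟪rk, A i (x i) - A i (xk i)⟫ := by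
      rw [inner_sub_right]; ring
    have hnrm1 : ‖x i - x1 i i‖ ^ 2 = ‖x1 i i - x i‖ ^ 2 := by rw [norm_sub_rev]
    have hnrm2 : ‖x i - xk i‖ ^ 2 = ‖xk i - x i‖ ^ 2 := by rw [norm_sub_rev]
    rw [hg1, hg2, hy_1, hy_2, hr_1, hr_2, hnrm1, hnrm2] at hB
    rw [hCq, hD, e3 i, e4 i, e5 i, h6, h8, h7, hAsub i]
    linarith [hdi, hB]
  -- sum the per-block inequalities
  have hsum1 : ∑ i, ((g (x1 i) + ∑ i', h i' (x1 i i')) - (g x + ∑ i', h i' (x i'))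
        + ⟪y1 i, Amul A (x1 i) - b⟫ + (β - ρy) * ‖Amul A (x1 i) - b‖ ^ 2
        + PsiAug β f (x1 i) zk
        + 1 / 2 * ((∑ i', η i' * ‖x1 i i' - x i'‖ ^ 2) - (∑ i', η i' * ‖xk i' - x i'‖ ^ 2)
            + ∑ i', (η i' - ℓ i') * ‖x1 i i' - xk i'‖ ^ 2)
        - β / 2 * (‖Amul A (x1 i) - b‖ ^ 2 - ‖rk‖ ^ 2 + ‖Amul A (x1 i - xk)‖ ^ 2))
      ≤ ∑ i : Fin n, (Cq + D i) :=
    Finset.sum_le_sum (fun i _ => key i)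
  -- the convexity bound for the summed linearization
  have hC : ∑ i, ⟪(g' xk) i + ∑ j, max (β * f j xk + zk j) 0 • (f' j xk) i, x i - xk i⟫
      ≤ (g x + PsiAug β f x zk) - (g xk + PsiAug β f xk zk) := by
    have hsplit : ∑ i, ⟪(g' xk) i + ∑ j, max (β * f j xk + zk j) 0 • (f' j xk) i, x i - xk i⟫
        = ⟪g' xk, x - xk⟫
          + ∑ j, max (β * f j xk + zk j) 0 * ⟪f' j xk, x - xk⟫ := by
      have houter : ∀ u : EB d, ⟪u, x - xk⟫ = ∑ i, ⟪u i, x i - xk i⟫ := by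
        intro u
        rw [PiLp.inner_apply]
        exact Finset.sum_congr rfl (fun i _ => by rw [PiLp.sub_apply])
      simp only [inner_add_left, sum_inner, real_inner_smul_left, houter,
        Finset.sum_add_distrib, Finset.mul_sum]
      rw [Finset.sum_comm]
    rw [hsplit]
    have hgi := convex_grad_ineq hgconv (hg xk) x
    have hji : ∀ j, max (β * f j xk + zk j) 0 * ⟪f' j xk, x - xk⟫
        ≤ psi β (f j x) (zk j) - psi β (f j xk) (zk j) := by
      intro j
      have hfi := convex_grad_ineq (hfconv j) (hf j xk) x
      have h1 := psi_grad hβ (f j xk) (f j xk + ⟪f' j xk, x - xk⟫) (zk j)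
      have h2 := psi_mono hβ (v := zk j) (by linarith : f j xk + ⟪f' j xk, x - xk⟫ ≤ f j x)
      simp only [add_sub_cancel_left] at h1
      linarith
    have hsumj := Finset.sum_le_sum (s := Finset.univ) (fun j _ => hji j)
    rw [Finset.sum_sub_distrib] at hsumj
    have : PsiAug β f x zk = ∑ j, psi β (f j x) (zk j) := rfl
    have h2 : PsiAug β f xk zk = ∑ j, psi β (f j xk) (zk j) := rfl
    rw [this, h2]
    linarith
  -- sum of the A-linear terms telescopes against feasibility
  have hAx : ∑ i, (A i (x i) - A i (xk i)) = -rk := by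
    rw [Finset.sum_sub_distrib]
    have h1 : ∑ i, A i (x i) = Amul A x := rfl
    have h2 : ∑ i, A i (xk i) = Amul A xk := rfl
    rw [h1, h2, hx, hrk]
    abel
  have hDsum : ∑ i, D i ≤ -Cq := by
    have hΨx : PsiAug β f x zk ≤ 0 :=
      Finset.sum_nonpos (fun j _ => psi_nonpos hβ (hfx j) (hzk j))
    have hs3 : ∑ i, ⟪yk, A i (x i) - A i (xk i)⟫ = -⟪yk, rk⟫ := by
      rw [← inner_sum, hAx, inner_neg_right]
    have hs4 : ∑ i, ⟪rk, A i (x i) - A i (xk i)⟫ = -‖rk‖ ^ 2 := by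
      rw [← inner_sum, hAx, inner_neg_right, real_inner_self_eq_norm_sq]
    have hs1 : ∑ i, D i = (∑ i, (h i (x i) - h i (xk i)))
        + (∑ i, ⟪(g' xk) i + ∑ j, max (β * f j xk + zk j) 0 • (f' j xk) i, x i - xk i⟫)
        + (∑ i, ⟪yk, A i (x i) - A i (xk i)⟫)
        + β * (∑ i, ⟪rk, A i (x i) - A i (xk i)⟫) := by
      rw [hD]
      simp only [Finset.sum_add_distrib, Finset.mul_sum]
    have hs2 : ∑ i, (h i (x i) - h i (xk i))
        = (∑ i', h i' (x i')) - (∑ i', h i' (xk i')) := Finset.sum_sub_distrib _ _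
    rw [hs1, hs2, hs3, hs4, hCq]
    nlinarith [hC, hΨx]
  have hsum2 : ∑ i : Fin n, (Cq + D i) = n * Cq + ∑ i, D i := by
    rw [Finset.sum_add_distrib, Finset.sum_const, Finset.card_univ, Fintype.card_fin,
      nsmul_eq_mul]
  have hfinal : ∑ i, ((g (x1 i) + ∑ i', h i' (x1 i i')) - (g x + ∑ i', h i' (x i'))
        + ⟪y1 i, Amul A (x1 i) - b⟫ + (β - ρy) * ‖Amul A (x1 i) - b‖ ^ 2
        + PsiAug β f (x1 i) zk
        + 1 / 2 * ((∑ i', η i' * ‖x1 i i' - x i'‖ ^ 2) - (∑ i', η i' * ‖xk i' - x i'‖ ^ 2)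
            + ∑ i', (η i' - ℓ i') * ‖x1 i i' - xk i'‖ ^ 2)
        - β / 2 * (‖Amul A (x1 i) - b‖ ^ 2 - ‖rk‖ ^ 2 + ‖Amul A (x1 i - xk)‖ ^ 2))
      ≤ (n - 1) * Cq := by
    rw [hsum2] at hsum1
    linarith
  calc (1 / (n : ℝ)) * ∑ i, ((g (x1 i) + ∑ i', h i' (x1 i i')) - (g x + ∑ i', h i' (x i'))
        + ⟪y1 i, Amul A (x1 i) - b⟫ + (β - ρy) * ‖Amul A (x1 i) - b‖ ^ 2
        + PsiAug β f (x1 i) zk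
        + 1 / 2 * ((∑ i', η i' * ‖x1 i i' - x i'‖ ^ 2) - (∑ i', η i' * ‖xk i' - x i'‖ ^ 2)
            + ∑ i', (η i' - ℓ i') * ‖x1 i i' - xk i'‖ ^ 2)
        - β / 2 * (‖Amul A (x1 i) - b‖ ^ 2 - ‖rk‖ ^ 2 + ‖Amul A (x1 i - xk)‖ ^ 2))
      ≤ (1 / (n : ℝ)) * ((n - 1) * Cq) := by
        exact mul_le_mul_of_nonneg_left hfinal (by positivity)
    _ = (1 - 1 / (n : ℝ)) * Cq := by
        field_simp


end
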